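/- Define j(δ, ε) = (1/1.268)·(sqrt(δ/7.256) + sqrt(δ/7.256 − δ²/ε²)). Then for all (δ, ε) with 0 < ε ≤ 0.3 and 0 < δ ≤ ε²/7.256, one has j(δ, ε) ≤ 0.0424. -/

import Mathlib

lemma key_17 (x : ℝ) (hx0 : 0 ≤ x) (hx1 : x ≤ 1) :
    Real.sqrt x + Real.sqrt (x - x ^ 2) ≤ 3 * Real.sqrt 3 / 4 := by
  have hu0 : (0:ℝ) ≤ 1 - x := by linarith
  set a := Real.sqrt x with ha'
  set u := Real.sqrt (1 - x) with hu'
  have ha : a ^ 2 = x := Real.sq_sqrt hx0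
  have hu : u ^ 2 = 1 - x := Real.sq_sqrt hu0
  have ha0 : 0 ≤ a := Real.sqrt_nonneg _
  have huge : 0 ≤ u := Real.sqrt_nonneg _
  have hb : Real.sqrt (x - x ^ 2) = a * u := by
    rw [show x - x ^ 2 = x * (1 - x) by ring, Real.sqrt_mul hx0]
  have hr : (Real.sqrt 3) ^ 2 = 3 := Real.sq_sqrt (by norm_num)
  have hr0 : 0 ≤ Real.sqrt 3 := Real.sqrt_nonneg _
  rw [hb]
  have h1 : (a * (1 + u)) ^ 2 ≤ (3 * Real.sqrt 3 / 4) ^ 2 := by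
    nlinarith [sq_nonneg (2 * u - 1), mul_nonneg huge (sq_nonneg (2 * u - 1))]
  have h2 : a * (1 + u) ≤ 3 * Real.sqrt 3 / 4 := by
    have := Real.sqrt_le_sqrt h1
    rwa [Real.sqrt_sq (by positivity), Real.sqrt_sq (by positivity)] at this
  nlinarith [h2]

theorem stmt_17 (δ ε : ℝ) (hε : 0 < ε) (hε3 : ε ≤ 0.3)
    (hδ : 0 < δ) (hδε : δ ≤ ε ^ 2 / 7.256) :
    (1 / 1.268) * (Real.sqrt (δ / 7.256) + Real.sqrt (δ / 7.256 - δ ^ 2 / ε ^ 2))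
      ≤ 0.0424 := by
  have hεne : ε ≠ 0 := ne_of_gt hε
  set x : ℝ := 7.256 * δ / ε ^ 2 with hx'
  have hx0 : 0 ≤ x := by positivity
  have hx1 : x ≤ 1 := by
    rw [hx', div_le_one (by positivity)]
    have h := (le_div_iff₀ (by norm_num : (0:ℝ) < 7.256)).mp hδε
    linarith
  have hc0 : (0:ℝ) ≤ ε / 7.256 := by positivity
  have e1 : δ / 7.256 = (ε / 7.256) ^ 2 * x := by
    rw [hx']
    field_simp
  have e2 : δ / 7.256 - δ ^ 2 / ε ^ 2 = (ε / 7.256) ^ 2 * (x - x ^ 2) := by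
    rw [hx']
    field_simp
  have s1 : Real.sqrt (δ / 7.256) = (ε / 7.256) * Real.sqrt x := by
    rw [e1, Real.sqrt_mul (sq_nonneg _), Real.sqrt_sq hc0]
  have s2 : Real.sqrt (δ / 7.256 - δ ^ 2 / ε ^ 2)
      = (ε / 7.256) * Real.sqrt (x - x ^ 2) := by
    rw [e2, Real.sqrt_mul (sq_nonneg _), Real.sqrt_sq hc0]
  rw [s1, s2, ← mul_add]
  have hkey := key_17 x hx0 hx1
  have hr : (Real.sqrt 3) ^ 2 = 3 := Real.sq_sqrt (by norm_num)
  have hr0 : 0 ≤ Real.sqrt 3 := Real.sqrt_nonneg _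
  have hr2 : Real.sqrt 3 ≤ 1.7320509 := by nlinarith
  have hsum : Real.sqrt x + Real.sqrt (x - x ^ 2) ≤ 1.29903818 := by nlinarith
  have hsn : 0 ≤ Real.sqrt x + Real.sqrt (x - x ^ 2) := by positivity
  have : ε / 7.256 * (Real.sqrt x + Real.sqrt (x - x ^ 2)) ≤ 0.3 / 7.256 * 1.29903818 := by
    apply mul_le_mul (by gcongr) hsum hsn (by norm_num)
  nlinarith [this]
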